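/- Let F : Y → [0, +∞) be convex and Fréchet differentiable with gradient ∇F, let J : X → ℝ ∪ {+∞} be proper and convex, let τ > 0, and assume the surrogate functional J_τ(u) := J(u) − τ F(Ku) is convex on X. Suppose for a fixed k ≥ 1: p^{k−1} ∈ ∂J(u^{k−1}), q^{k−1} := p^{k−1} − τ K*∇F(Ku^{k−1}) ∈ ∂J_τ(u^{k−1}), and u^k minimizes the linearized Bregman objective u ↦ τ ⟨∇F(Ku^{k−1}), Ku⟩ + D_J^{p^{k−1}}(u, u^{k−1}) over X. Then the monotone decrease F(Ku^k) + (1/τ) D_{J_τ}^{q^{k−1}}(u^k, u^{k−1}) ≤ F(Ku^{k−1}) holds; consequently, if this holds for all k ≥ 1 and F(Ku⁰) < ∞, then ∑_{k=1}^{N} D_{J_τ}^{q^{k−1}}(u^k, u^{k−1}) ≤ τ F(Ku⁰) for all N, and D_{J_τ}^{q^{k−1}}(u^k, u^{k−1}) → 0 as k → ∞. -/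
import Mathlib


open scoped RealInnerProductSpace
open Filter

/-- Subgradient of an extended-real-valued convex function:
p ∈ ∂J(v) means J(w) ≥ J(v) + ⟨p, w − v⟩ for all w. -/
def ESubgradAt {X : Type*} [NormedAddCommGroup X] [InnerProductSpace ℝ X]
    (J : X → EReal) (p v : X) : Prop :=
  ∀ w, J v + (⟪p, w - v⟫ : ℝ) ≤ J w

/-- Generalized Bregman distance D_G^p(u, v) := G(u) − G(v) − ⟨p, u − v⟩. -/
noncomputable def ebreg {X : Type*} [NormedAddCommGroup X] [InnerProductSpace ℝ X]
    (G : X → EReal) (p u v : X) : EReal :=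
  G u - G v - (⟪p, u - v⟫ : ℝ)

/-- **Monotone decrease of the data fidelity along the linearized Bregman iteration.**
F : Y → [0, ∞) convex Fréchet differentiable with gradient ∇F, J proper convex, τ > 0
with the surrogate J_τ(u) := J(u) − τF(Ku) convex. If q^{k−1} := p^{k−1} − τK*∇F(Ku^{k−1})
∈ ∂J_τ(u^{k−1}) with p^{k−1} ∈ ∂J(u^{k−1}) and u^k minimizes
u ↦ τ⟨∇F(Ku^{k−1}), Ku⟩ + D_J^{p^{k−1}}(u, u^{k−1}), then
F(Ku^k) + (1/τ)D_{J_τ}^{q^{k−1}}(u^k, u^{k−1}) ≤ F(Ku^{k−1}); consequently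
∑_{k=1}^{N} D_{J_τ}^{q^{k−1}}(u^k, u^{k−1}) ≤ τF(Ku⁰) for all N, and
D_{J_τ}^{q^{k−1}}(u^k, u^{k−1}) → 0. -/
theorem stmt_12
    {X Y : Type*} [NormedAddCommGroup X] [InnerProductSpace ℝ X] [CompleteSpace X]
    [NormedAddCommGroup Y] [InnerProductSpace ℝ Y] [CompleteSpace Y]
    (K : X →L[ℝ] Y)
    (F : Y → ℝ) (gF : Y → Y)
    (hFgrad : ∀ y, HasGradientAt F (gF y) y)
    (hFconv : ConvexOn ℝ Set.univ F) (hFnonneg : ∀ y, 0 ≤ F y)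
    (J : X → EReal)
    (hJbot : ∀ u, J u ≠ ⊥)
    (hJproper : ∃ u, J u ≠ ⊤)
    (hJconv : ∀ u v : X, ∀ t : ℝ, 0 ≤ t → t ≤ 1 →
      J (t • u + (1 - t) • v) ≤ (t : EReal) * J u + ((1 - t : ℝ) : EReal) * J v)
    (τ : ℝ) (hτ : 0 < τ)
    (hJτconv : ∀ u v : X, ∀ t : ℝ, 0 ≤ t → t ≤ 1 →
      (J (t • u + (1 - t) • v) - ((τ * F (K (t • u + (1 - t) • v)) : ℝ) : EReal))
        ≤ (t : EReal) * (J u - ((τ * F (K u) : ℝ) : EReal))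
          + ((1 - t : ℝ) : EReal) * (J v - ((τ * F (K v) : ℝ) : EReal)))
    (u p : ℕ → X)
    (hp : ∀ k, ESubgradAt J (p k) (u k))
    (hq : ∀ k, ESubgradAt (fun x => J x - ((τ * F (K x) : ℝ) : EReal))
      (p k - τ • ContinuousLinearMap.adjoint K (gF (K (u k)))) (u k))
    (hmin : ∀ k, ∀ x : X,
      ((τ * ⟪gF (K (u k)), K (u (k + 1))⟫ : ℝ) : EReal)
          + ebreg J (p k) (u (k + 1)) (u k)
        ≤ ((τ * ⟪gF (K (u k)), K x⟫ : ℝ) : EReal) + ebreg J (p k) x (u k)) :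
    (∀ k, (F (K (u (k + 1))) : EReal)
        + ((1 / τ : ℝ) : EReal)
          * ebreg (fun x => J x - ((τ * F (K x) : ℝ) : EReal))
              (p k - τ • ContinuousLinearMap.adjoint K (gF (K (u k))))
              (u (k + 1)) (u k)
        ≤ (F (K (u k)) : EReal))
    ∧ (∀ N : ℕ,
        ∑ k ∈ Finset.range N,
            ebreg (fun x => J x - ((τ * F (K x) : ℝ) : EReal))
              (p k - τ • ContinuousLinearMap.adjoint K (gF (K (u k))))
              (u (k + 1)) (u k)
          ≤ ((τ * F (K (u 0)) : ℝ) : EReal))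
    ∧ Tendsto (fun k =>
        ebreg (fun x => J x - ((τ * F (K x) : ℝ) : EReal))
          (p k - τ • ContinuousLinearMap.adjoint K (gF (K (u k))))
          (u (k + 1)) (u k)) atTop (nhds 0)  := by
  classical
  obtain ⟨w0, hw0⟩ := hJproper
  -- J (u k) is finite
  have hfin : ∀ k, J (u k) = (((J (u k)).toReal : ℝ) : EReal) := by
    intro k
    refine (EReal.coe_toReal ?_ (hJbot _)).symm
    intro htop
    have h := hp k w0
    rw [htop] at h
    rw [EReal.top_add_coe] at h
    exact hw0 (top_le_iff.mp h)
  set j : ℕ → ℝ := fun k => (J (u k)).toReal with hj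
  -- inner product identity
  have hinner : ∀ k, (⟪p k - τ • ContinuousLinearMap.adjoint K (gF (K (u k))), u (k+1) - u k⟫ : ℝ)
      = ⟪p k, u (k+1) - u k⟫ - τ * ⟪gF (K (u k)), K (u (k+1)) - K (u k)⟫ := by
    intro k
    rw [inner_sub_left, real_inner_smul_left, ContinuousLinearMap.adjoint_inner_left,
      ← map_sub]
  -- real Bregman value
  set r : ℕ → ℝ := fun k =>
    (j (k+1) - τ * F (K (u (k+1)))) - (j k - τ * F (K (u k)))
      - (⟪p k, u (k+1) - u k⟫ - τ * ⟪gF (K (u k)), K (u (k+1)) - K (u k)⟫) with hr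
  have hbreg : ∀ k, ebreg (fun x => J x - ((τ * F (K x) : ℝ) : EReal))
      (p k - τ • ContinuousLinearMap.adjoint K (gF (K (u k)))) (u (k+1)) (u k)
      = ((r k : ℝ) : EReal) := by
    intro k
    unfold ebreg
    beta_reduce
    rw [hfin (k+1), hfin k, hinner k]
    norm_cast
  -- real version of the minimality at x = u k
  have hminR : ∀ k,
      τ * ⟪gF (K (u k)), K (u (k+1))⟫ + (j (k+1) - j k - ⟪p k, u (k+1) - u k⟫)
        ≤ τ * ⟪gF (K (u k)), K (u k)⟫ + (j k - j k - ⟪p k, u k - u k⟫) := by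
    intro k
    have h := hmin k (u k)
    unfold ebreg at h
    rw [hfin (k+1), hfin k] at h
    norm_cast at h
  -- key real inequality
  have hkey : ∀ k, r k ≤ τ * (F (K (u k)) - F (K (u (k+1)))) := by
    intro k
    have h := hminR k
    simp only [sub_self, inner_zero_right, inner_sub_right] at h
    simp only [hr, inner_sub_right]
    linarith
  -- nonnegativity of r from the subgradient of the surrogate
  have hr0 : ∀ k, 0 ≤ r k := by
    intro k
    have h := hq k (u (k+1))
    beta_reduce at h
    rw [hfin (k+1), hfin k, hinner k] at h
    norm_cast at h
    simp only [hr]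
    linarith
  -- real partial sum bound
  have hsumR : ∀ N : ℕ, ∑ k ∈ Finset.range N, r k ≤ τ * F (K (u 0)) := by
    intro N
    calc ∑ k ∈ Finset.range N, r k
        ≤ ∑ k ∈ Finset.range N, τ * (F (K (u k)) - F (K (u (k+1)))) :=
          Finset.sum_le_sum fun k _ => hkey k
      _ = τ * (F (K (u 0)) - F (K (u N))) := by
          rw [← Finset.mul_sum, Finset.sum_range_sub' (fun k => F (K (u k)))]
      _ ≤ τ * F (K (u 0)) := by
          have := hFnonneg (K (u N))
          nlinarith
  refine ⟨?_, ?_, ?_⟩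
  · intro k
    rw [hbreg k]
    have h1 : F (K (u (k+1))) + (1/τ) * r k ≤ F (K (u k)) := by
      have h := hkey k
      rw [one_div]
      have e : τ⁻¹ * (τ * (F (K (u k)) - F (K (u (k+1))))) = F (K (u k)) - F (K (u (k+1))) := by
        field_simp
      have h2 := mul_le_mul_of_nonneg_left h (inv_nonneg.mpr hτ.le)
      rw [e] at h2
      linarith
    calc (F (K (u (k+1))) : EReal) + ((1/τ : ℝ) : EReal) * ((r k : ℝ) : EReal)
        = (((F (K (u (k+1))) + (1/τ) * r k : ℝ)) : EReal) := by norm_cast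
      _ ≤ (F (K (u k)) : EReal) := by exact_mod_cast h1
  · intro N
    have : ∑ k ∈ Finset.range N,
        ebreg (fun x => J x - ((τ * F (K x) : ℝ) : EReal))
          (p k - τ • ContinuousLinearMap.adjoint K (gF (K (u k)))) (u (k+1)) (u k)
        = ((∑ k ∈ Finset.range N, r k : ℝ) : EReal) := by
      rw [Finset.sum_congr rfl fun k _ => hbreg k]
      induction N with
      | zero => simp
      | succ n ih => rw [Finset.sum_range_succ, Finset.sum_range_succ, ih]; norm_cast
    rw [this]
    exact_mod_cast hsumR N
  · have hsum : Summable r := summable_of_sum_range_le hr0 hsumR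
    have ht : Tendsto r atTop (nhds 0) := hsum.tendsto_atTop_zero
    have : Tendsto (fun k => ((r k : ℝ) : EReal)) atTop (nhds ((0:ℝ) : EReal)) :=
      EReal.tendsto_coe.mpr ht
    simp only [EReal.coe_zero] at this
    exact Tendsto.congr (fun k => (hbreg k).symm) this
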